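/- Graded commutativity of the cup product in tangent cohomology: for every bilinear map μ ∈ C² and all multilinear maps f ∈ C^m, g ∈ C^n with δ_μ f = 0 and δ_μ g = 0, one has f ⌣ g − (−1)^{mn} g ⌣ f = (−1)^{n−1} δ_μ(f ∘ g); in particular, the graded commutator of cocycles under the cup product is a coboundary of δ_μ. -/

import Mathlib

set_option linter.unusedSectionVars false
set_option linter.unreachableTactic false
set_option linter.unusedTactic false
set_option maxHeartbeats 1000000


open Finset

section OperadPrelude

variable {K : Type*} [CommRing K] {L : Type*} [AddCommGroup L] [Module K L]

/-- `C K L n`: the `K`-module of `n`-multilinear maps `L^n → L`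
(the degree-`n` component of the endomorphism operad of `L`). -/
abbrev C (K L : Type*) [CommRing K] [AddCommGroup L] [Module K L] (n : ℕ) :=
  MultilinearMap K (fun _ : Fin n => L) L

/-- The extension of an `n`-ary multilinear operation to sequences `ℕ → L`:
it evaluates `f` on the first `n` entries of the sequence.  Two `n`-ary
multilinear operations are equal iff their extensions are equal, so operadic
identities are stated as identities between extensions. -/
def ex {n : ℕ} (f : C K L n) : (ℕ → L) → L := fun x => f fun j => x j.1

/-- The sign `(-1)^e` for an integer exponent `e`. -/
def sgn (e : ℤ) : ℤ := (((-1 : ℤˣ) ^ e : ℤˣ) : ℤ)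

/-- Partial composition `f ∘ᵢ g`, where `n = deg g`:
`(f ∘ᵢ g)(x₀, x₁, …) = (-1)^{i(n-1)} f(x₀,…,x_{i-1}, g(x_i,…,x_{i+n-1}), x_{i+n},…)`. -/
def pc (n i : ℕ) (f g : (ℕ → L) → L) : (ℕ → L) → L :=
  fun x => sgn ((i : ℤ) * ((n : ℤ) - 1)) •
    f fun j => if j < i then x j else if j = i then g (fun k => x (i + k)) else x (j + n - 1)

/-- Total composition `f ∘ g := Σ_{i=0}^{m-1} f ∘ᵢ g`, where `m = deg f`, `n = deg g`. -/
def tc (m n : ℕ) (f g : (ℕ → L) → L) : (ℕ → L) → L :=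
  fun x => ∑ i ∈ Finset.range m, pc n i f g x

/-- The associator `(h, f, g) := (h ∘ f) ∘ g − h ∘ (f ∘ g)` of the total composition,
where `m = deg h`, `n = deg f`, `p = deg g`. -/
def assoc (m n p : ℕ) (h f g : (ℕ → L) → L) : (ℕ → L) → L :=
  fun x => tc (m + n - 1) p (tc m n h f) g x - tc m (n + p - 1) h (tc n p f g) x

/-- The brace `⟨h|fg⟩ := Σ (h ∘ᵢ f) ∘ⱼ g`, summed over `0 ≤ i ≤ m-2`,
`i + n ≤ j ≤ m + n - 2`, where `m = deg h`, `n = deg f`, `p = deg g`. -/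
def br2 (m n p : ℕ) (h f g : (ℕ → L) → L) : (ℕ → L) → L :=
  fun x => ∑ i ∈ Finset.range (m - 1), ∑ j ∈ Finset.Icc (i + n) (m + n - 2),
    pc p j (pc n i h f) g x

/-- The triple brace `⟨h|fgb⟩ := Σ ((h ∘ᵢ f) ∘ⱼ g) ∘ₖ b`, summed over `0 ≤ i ≤ m-3`,
`i + n ≤ j ≤ m + n - 3`, `j + p ≤ k ≤ m + n + p - 3`, where
`m = deg h`, `n = deg f`, `p = deg g`, `q = deg b`. -/
def br3 (m n p q : ℕ) (h f g b : (ℕ → L) → L) : (ℕ → L) → L :=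
  fun x => ∑ i ∈ Finset.range (m - 2), ∑ j ∈ Finset.Icc (i + n) (m + n - 3),
    ∑ k ∈ Finset.Icc (j + p) (m + n + p - 3),
      pc q k (pc p j (pc n i h f) g) b x

/-- The Gerstenhaber bracket `[f,g] := f ∘ g − (-1)^{|f||g|} g ∘ f`,
where `m = deg f`, `n = deg g`, `|f| = m - 1`, `|g| = n - 1`. -/
def gb (m n : ℕ) (f g : (ℕ → L) → L) : (ℕ → L) → L :=
  fun x => tc m n f g x - sgn (((m : ℤ) - 1) * ((n : ℤ) - 1)) • tc n m g f x

/-- The cup product `f ⌣ g := (-1)^{deg f} (μ ∘₀ f) ∘_{deg f} g`,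
where `m = deg f`, `n = deg g`. -/
def cup (μ : C K L 2) (m n : ℕ) (f g : (ℕ → L) → L) : (ℕ → L) → L :=
  fun x => sgn (m : ℤ) • pc n m (pc m 0 (ex μ) f) g x

/-- The coboundary operator `δ_μ f := −[f, μ]`, where `m = deg f`. -/
def delta (μ : C K L 2) (m : ℕ) (f : (ℕ → L) → L) : (ℕ → L) → L :=
  fun x => - gb m 2 f (ex μ) x


-- ## sgn lemmas
lemma sgn_mul_sgn (a b : ℤ) : sgn a * sgn b = sgn (a + b) := by
  unfold sgn; rw [← Units.val_mul, ← zpow_add]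

lemma sgn_smul_sgn_smul (a b : ℤ) (v : L) : sgn a • sgn b • v = sgn (a+b) • v := by
  rw [smul_smul, sgn_mul_sgn]

lemma sgn_even {a : ℤ} (h : a % 2 = 0) : sgn a = 1 := by
  obtain ⟨c, rfl⟩ : ∃ c, a = 2*c := ⟨a/2, by omega⟩
  unfold sgn
  rw [zpow_mul, show ((2:ℤ)) = ((2:ℕ):ℤ) from rfl, zpow_natCast]
  norm_num

lemma sgn_add_two_mul (a c : ℤ) : sgn (a + 2*c) = sgn a := by
  rw [← sgn_mul_sgn, sgn_even (show (2*c) % 2 = 0 by omega), mul_one]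

lemma sgn_congr {a b : ℤ} (h : a % 2 = b % 2) : sgn a = sgn b := by
  have h2 : b = a + 2*((b-a)/2) := by omega
  rw [h2, sgn_add_two_mul]

lemma sgn_smul_sgn_smul_self (a : ℤ) (v : L) : sgn a • sgn a • v = v := by
  rw [sgn_smul_sgn_smul, sgn_even (by omega), one_smul]

lemma sgn_cases (e : ℤ) : sgn e = 1 ∨ sgn e = -1 := by
  unfold sgn
  rcases Int.units_eq_one_or ((-1 : ℤˣ) ^ e) with h | h <;> rw [h] <;> simp

-- ## insertion helpers
def ins (i : ℕ) (v : L) (n : ℕ) (x : ℕ → L) : ℕ → L :=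
  fun t => if t < i then x t else if t = i then v else x (t + n - 1)
def shf (i : ℕ) (x : ℕ → L) : ℕ → L := fun k => x (i + k)

lemma pc_def' (n i : ℕ) (f g : (ℕ → L) → L) (x : ℕ → L) :
    pc n i f g x = sgn ((i : ℤ) * ((n : ℤ) - 1)) • f (ins i (g (shf i x)) n x) := rfl

lemma ins_comm {j i : ℕ} (hji : j < i) (a b : L) (n p : ℕ) (x : ℕ → L) :
    ins i a n (ins j b p x) = ins j b p (ins (i+p-1) a n x) := by
  funext t
  simp only [ins]
  split_ifs <;> first | rfl | omega | (exfalso; omega) | (congr 1; omega)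

lemma shf_ins_gt {j i : ℕ} (hji : j < i) (b : L) (p : ℕ) (x : ℕ → L) :
    shf i (ins j b p x) = shf (i+p-1) x := by
  funext k
  simp only [shf, ins]
  split_ifs <;> first | rfl | omega | (exfalso; omega) | (congr 1; omega)

lemma shf_ins_lt {j i' p : ℕ} (hj : j + p ≤ i') (a : L) (n : ℕ) (x : ℕ → L) :
    ∀ t < p, shf j (ins i' a n x) t = shf j x t := by
  intro t ht
  simp only [shf, ins]
  split_ifs <;> first | rfl | omega | (exfalso; omega) | (congr 1; omega)

lemma shf_ins_nested (i k : ℕ) (b : L) (p : ℕ) (x : ℕ → L) :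
    shf i (ins (i+k) b p x) = ins k b p (shf i x) := by
  funext t
  simp only [shf, ins]
  split_ifs <;> first | rfl | omega | (exfalso; omega) | (congr 1; omega)

lemma shf_shf (i k : ℕ) (x : ℕ → L) : shf k (shf i x) = shf (i+k) x := by
  funext t; simp only [shf]; congr 1; omega

-- ## support
def sup (p : ℕ) (H : (ℕ → L) → L) : Prop :=
  ∀ x y : ℕ → L, (∀ t, t < p → x t = y t) → H x = H y

lemma sup_ex {p : ℕ} (h : C K L p) : sup p (ex h) := by
  intro x y hxy
  unfold ex
  congr 1
  funext j
  exact hxy j j.2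

-- ## disjoint commutation
lemma pc_disjoint (F G H : (ℕ → L) → L) {n p i j : ℕ} (hji : j < i) (hH : sup p H) :
    pc p j (pc n i F G) H
      = sgn (((n:ℤ)-1)*((p:ℤ)-1)) • pc n (i+p-1) (pc p j F H) G := by
  funext x
  rw [Pi.smul_apply, pc_def', pc_def', pc_def', pc_def']
  rw [sgn_smul_sgn_smul, sgn_smul_sgn_smul, sgn_smul_sgn_smul]
  rw [shf_ins_gt hji]
  have h2 : H (shf j (ins (i+p-1) (G (shf (i+p-1) x)) n x)) = H (shf j x) :=
    hH _ _ (shf_ins_lt (by omega) _ _ _)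
  rw [h2, ins_comm hji]
  congr 1
  have hc : ((i+p-1:ℕ):ℤ) = (i:ℤ)+(p:ℤ)-1 := by omega
  rw [hc]
  have key : (↑j*((p:ℤ)-1) + ↑i*((n:ℤ)-1))
      = (((n:ℤ)-1)*((p:ℤ)-1) + (((i:ℤ)+(p:ℤ)-1)*((n:ℤ)-1) + ↑j*((p:ℤ)-1)))
        + 2*(-(((n:ℤ)-1)*((p:ℤ)-1))) := by ring
  rw [key, sgn_add_two_mul]
  congr 1
  ring

-- ## multilinear slot machinery
lemma fin_ins_update {m : ℕ} {i : ℕ} (hi : i < m) (v : L) (n' : ℕ) (x : ℕ → L) :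
    (fun j : Fin m => ins i v n' x j)
      = Function.update (fun j : Fin m => ins i (0:L) n' x j) ⟨i,hi⟩ v := by
  funext j
  rcases eq_or_ne j ⟨i,hi⟩ with h | h
  · subst h
    rw [Function.update_self]
    simp [ins]
  · rw [Function.update_of_ne h]
    have hj : (j:ℕ) ≠ i := by
      intro hc; exact h (Fin.ext hc)
    simp only [ins]
    split_ifs <;> first | rfl | (exfalso; omega)

lemma ex_ins_agree {m : ℕ} (f : C K L m) (a b : ℕ → L) (h : ∀ t, t < m → a t = b t) :
    ex f a = ex f b := sup_ex f a b h

lemma ex_ins_smul {m : ℕ} (f : C K L m) {i : ℕ} (hi : i < m) (e : ℤ) (v : L) (n' : ℕ)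
    (x : ℕ → L) :
    ex f (ins i (sgn e • v) n' x) = sgn e • ex f (ins i v n' x) := by
  unfold ex
  rw [fin_ins_update hi, fin_ins_update hi v]
  rcases sgn_cases e with h | h <;> rw [h]
  · rw [one_smul, one_smul]
  · rw [neg_one_zsmul, neg_one_zsmul, f.map_update_neg]

lemma ex_ins_sum {m : ℕ} (f : C K L m) {i : ℕ} (hi : i < m) {ι : Type*} (s : Finset ι)
    (w : ι → L) (n' : ℕ) (x : ℕ → L) :
    ex f (ins i (∑ a ∈ s, w a) n' x) = ∑ a ∈ s, ex f (ins i (w a) n' x) := by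
  unfold ex
  rw [fin_ins_update hi]
  rw [f.map_update_sum]
  refine Finset.sum_congr rfl fun a _ => ?_
  conv_rhs => rw [fin_ins_update hi]

-- ## nested composition
lemma pc_nested {m : ℕ} (f : C K L m) (G H : (ℕ → L) → L) {n p i k : ℕ}
    (hi : i < m) (hk : k < n) :
    pc p (i+k) (pc n i (ex f) G) H = pc (n+p-1) i (ex f) (pc p k G H) := by
  funext x
  rw [pc_def', pc_def', pc_def', pc_def']
  rw [sgn_smul_sgn_smul, shf_ins_nested, shf_shf, ex_ins_smul f hi, sgn_smul_sgn_smul]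
  have harg : ex f (ins i (G (ins k (H (shf (i+k) x)) p (shf i x))) n
        (ins (i+k) (H (shf (i+k) x)) p x))
      = ex f (ins i (G (ins k (H (shf (i+k) x)) p (shf i x))) (n+p-1) x) := by
    apply ex_ins_agree
    intro t ht
    simp only [ins]
    split_ifs <;> first | rfl | omega | (exfalso; omega) | (congr 1; omega)
  rw [harg]
  congr 1
  have hc : ((i+k:ℕ):ℤ) = (i:ℤ)+(k:ℤ) := by omega
  have hc2 : ((n+p-1:ℕ):ℤ) = (n:ℤ)+(p:ℤ)-1 := by omega
  rw [hc, hc2]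
  ring

-- ## pc linearity lemmas
lemma pc_outer_sum {ι : Type*} (s : Finset ι) (T : ι → (ℕ → L) → L) (H : (ℕ → L) → L)
    (p j : ℕ) (x : ℕ → L) :
    pc p j (fun y => ∑ a ∈ s, T a y) H x = ∑ a ∈ s, pc p j (T a) H x := by
  simp only [pc_def']
  rw [Finset.smul_sum]

lemma pc_outer_smul (c : ℤ) (T H : (ℕ → L) → L) (p j : ℕ) (x : ℕ → L) :
    pc p j (c • T) H x = c • pc p j T H x := by
  simp only [pc_def', Pi.smul_apply]
  rw [smul_comm]

lemma pc_ex_inner_sum {m : ℕ} (f : C K L m) {i : ℕ} (hi : i < m) {ι : Type*}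
    (s : Finset ι) (T : ι → (ℕ → L) → L) (p : ℕ) (x : ℕ → L) :
    pc p i (ex f) (fun y => ∑ a ∈ s, T a y) x = ∑ a ∈ s, pc p i (ex f) (T a) x := by
  simp only [pc_def']
  rw [ex_ins_sum f hi, Finset.smul_sum]

lemma pc_ex_inner_smul {m : ℕ} (f : C K L m) {i : ℕ} (hi : i < m) (e : ℤ)
    (T : (ℕ → L) → L) (p : ℕ) (x : ℕ → L) :
    pc p i (ex f) (sgn e • T) x = sgn e • pc p i (ex f) T x := by
  simp only [pc_def', Pi.smul_apply]
  rw [ex_ins_smul f hi, smul_comm]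


lemma sgn_one : sgn 1 = -1 := by
  unfold sgn; rw [zpow_one]; rfl

lemma sgn_succ (a : ℤ) : sgn (a+1) = -sgn a := by
  rw [← sgn_mul_sgn, sgn_one, mul_neg_one]


/-- graded commutativity of the cup product in tangent
cohomology: for cocycles `f, g`, the graded commutator of the cup product is
the coboundary `(-1)^{n-1} δ_μ(f ∘ g)`. -/
theorem cup_graded_commutative_in_tangent_cohomology
    (μ : C K L 2) {m n : ℕ} (f : C K L m) (g : C K L n)
    (hf : delta μ m (ex f) = 0) (hg : delta μ n (ex g) = 0) :
    cup μ m n (ex f) (ex g) - sgn ((m : ℤ) * (n : ℤ)) • cup μ n m (ex g) (ex f)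
      = sgn ((n : ℤ) - 1) • delta μ (m + n - 1) (tc m n (ex f) (ex g)) := by
  classical
  have hf' : tc m 2 (ex f) (ex μ) = sgn ((m:ℤ)-1) • tc 2 m (ex μ) (ex f) := by
    funext x
    have h0 := congrFun hf x
    simp only [delta, Pi.zero_apply, neg_eq_zero, gb] at h0
    have h1 := sub_eq_zero.mp h0
    rw [Pi.smul_apply, h1]
    norm_num
  have hg' : tc n 2 (ex g) (ex μ) = sgn ((n:ℤ)-1) • tc 2 n (ex μ) (ex g) := by
    funext x
    have h0 := congrFun hg x
    simp only [delta, Pi.zero_apply, neg_eq_zero, gb] at h0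
    have h1 := sub_eq_zero.mp h0
    rw [Pi.smul_apply, h1]
    norm_num
  funext x
  simp only [Pi.sub_apply, Pi.smul_apply, cup, delta, gb]
  -- STEP A
  have hA : tc (m+n-1) 2 (tc m n (ex f) (ex g)) (ex μ) x
      = sgn ((n:ℤ)-1) • sgn ((m:ℤ)-1) •
          ∑ b ∈ Finset.range (m+1),
            (pc n b (pc m 0 (ex μ) (ex f)) (ex g) x
              + pc n b (pc m 1 (ex μ) (ex f)) (ex g) x) := by
    have hA1 : tc (m+n-1) 2 (tc m n (ex f) (ex g)) (ex μ) x
        = ∑ i ∈ Finset.range m, ∑ j ∈ Finset.range (m+n-1),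
            pc 2 j (pc n i (ex f) (ex g)) (ex μ) x := by
      show ∑ j ∈ Finset.range (m+n-1), pc 2 j (tc m n (ex f) (ex g)) (ex μ) x = _
      rw [Finset.sum_comm]
      refine Finset.sum_congr rfl fun j _ => ?_
      exact pc_outer_sum (Finset.range m) (fun i => pc n i (ex f) (ex g)) (ex μ) 2 j x
    rw [hA1]
    have key : ∀ i ∈ Finset.range m,
        ∑ j ∈ Finset.range (m+n-1), pc 2 j (pc n i (ex f) (ex g)) (ex μ) x
          = sgn ((n:ℤ)-1) •
            ((∑ b ∈ Finset.range (i+1), pc n (i+1) (pc 2 b (ex f) (ex μ)) (ex g) x)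
              + ∑ a ∈ Finset.Ico i m, pc n i (pc 2 a (ex f) (ex μ)) (ex g) x) := by
      intro i hmem
      rw [Finset.mem_range] at hmem
      have hsplit : ∑ j ∈ Finset.range (m+n-1), pc 2 j (pc n i (ex f) (ex g)) (ex μ) x
          = ((∑ j ∈ Finset.Ico 0 i, pc 2 j (pc n i (ex f) (ex g)) (ex μ) x)
              + ∑ j ∈ Finset.Ico i (i+n), pc 2 j (pc n i (ex f) (ex g)) (ex μ) x)
            + ∑ j ∈ Finset.Ico (i+n) (m+n-1), pc 2 j (pc n i (ex f) (ex g)) (ex μ) x := by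
        rw [Finset.sum_Ico_consecutive _ (Nat.zero_le i) (by omega : i ≤ i+n),
          Finset.sum_Ico_consecutive _ (Nat.zero_le (i+n)) (by omega : i+n ≤ m+n-1),
          Finset.range_eq_Ico]
      rw [hsplit]
      have hlow : ∑ j ∈ Finset.Ico 0 i, pc 2 j (pc n i (ex f) (ex g)) (ex μ) x
          = sgn ((n:ℤ)-1) • ∑ b ∈ Finset.range i,
              pc n (i+1) (pc 2 b (ex f) (ex μ)) (ex g) x := by
        rw [← Finset.range_eq_Ico, Finset.smul_sum]
        refine Finset.sum_congr rfl fun j hj => ?_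
        rw [Finset.mem_range] at hj
        rw [congrFun (pc_disjoint (ex f) (ex g) (ex μ) hj (sup_ex μ)) x, Pi.smul_apply]
        norm_num
      have hmid : ∑ j ∈ Finset.Ico i (i+n), pc 2 j (pc n i (ex f) (ex g)) (ex μ) x
          = sgn ((n:ℤ)-1) • (pc n i (pc 2 i (ex f) (ex μ)) (ex g) x
              + pc n (i+1) (pc 2 i (ex f) (ex μ)) (ex g) x) := by
        rw [Finset.sum_Ico_eq_sum_range]
        rw [show i+n-i = n from by omega]
        have h1 : ∀ k ∈ Finset.range n,
            pc 2 (i+k) (pc n i (ex f) (ex g)) (ex μ) x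
              = pc (n+1) i (ex f) (pc 2 k (ex g) (ex μ)) x := by
          intro k hk
          rw [Finset.mem_range] at hk
          exact congrFun (pc_nested f (ex g) (ex μ) hmem hk) x
        rw [Finset.sum_congr rfl h1]
        rw [← pc_ex_inner_sum f hmem (Finset.range n) (fun k => pc 2 k (ex g) (ex μ)) (n+1) x]
        rw [show (fun y => ∑ k ∈ Finset.range n, pc 2 k (ex g) (ex μ) y)
              = tc n 2 (ex g) (ex μ) from rfl, hg']
        rw [pc_ex_inner_smul f hmem]
        rw [show tc 2 n (ex μ) (ex g)
              = (fun y => ∑ k ∈ Finset.range 2, pc n k (ex μ) (ex g) y) from rfl]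
        rw [pc_ex_inner_sum f hmem]
        rw [Finset.sum_range_succ, Finset.sum_range_one]
        congr 1
        have e0 := pc_nested (p:=n) f (ex μ) (ex g) hmem (show (0:ℕ) < 2 by omega)
        rw [show i+0 = i from rfl, show 2+n-1 = n+1 by omega] at e0
        have e1 := pc_nested (p:=n) f (ex μ) (ex g) hmem (show (1:ℕ) < 2 by omega)
        rw [show 2+n-1 = n+1 by omega] at e1
        rw [← congrFun e0 x, ← congrFun e1 x]
      have hhigh : ∑ j ∈ Finset.Ico (i+n) (m+n-1), pc 2 j (pc n i (ex f) (ex g)) (ex μ) x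
          = sgn ((n:ℤ)-1) • ∑ a ∈ Finset.Ico (i+1) m,
              pc n i (pc 2 a (ex f) (ex μ)) (ex g) x := by
        rw [Finset.smul_sum, Finset.sum_Ico_eq_sum_range, Finset.sum_Ico_eq_sum_range]
        rw [show m+n-1-(i+n) = m-(i+1) from by omega]
        refine Finset.sum_congr rfl fun l hl => ?_
        rw [Finset.mem_range] at hl
        have hd := pc_disjoint (n:=2) (p:=n) (ex f) (ex μ) (ex g)
          (show i < i+1+l by omega) (sup_ex g)
        rw [congrFun hd x, Pi.smul_apply]
        rw [sgn_smul_sgn_smul]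
        rw [show (((2:ℕ):ℤ)-1)*((n:ℤ)-1) = ((n:ℤ)-1) by norm_num]
        rw [show ((n:ℤ)-1) + ((n:ℤ)-1) = 0 + 2*((n:ℤ)-1) by ring, sgn_add_two_mul]
        rw [show sgn 0 = 1 from by unfold sgn; simp, one_smul]
        congr 1
        omega
      rw [hlow, hmid, hhigh]
      rw [Finset.sum_range_succ, Finset.sum_eq_sum_Ico_succ_bot hmem]
      simp only [smul_add]
      abel
    rw [Finset.sum_congr rfl key, ← Finset.smul_sum]
    congr 1
    -- triangle regrouping
    have htri : ∑ i ∈ Finset.range m,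
        ((∑ b ∈ Finset.range (i+1), pc n (i+1) (pc 2 b (ex f) (ex μ)) (ex g) x)
          + ∑ a ∈ Finset.Ico i m, pc n i (pc 2 a (ex f) (ex μ)) (ex g) x)
        = ∑ b ∈ Finset.range (m+1), ∑ a ∈ Finset.range m,
            pc n b (pc 2 a (ex f) (ex μ)) (ex g) x := by
      rw [Finset.sum_add_distrib]
      have h3 : ∀ c ∈ Finset.range (m+1),
          ∑ a ∈ Finset.range m, pc n c (pc 2 a (ex f) (ex μ)) (ex g) x
            = (∑ b ∈ Finset.range c, pc n c (pc 2 b (ex f) (ex μ)) (ex g) x)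
              + ∑ a ∈ Finset.Ico c m, pc n c (pc 2 a (ex f) (ex μ)) (ex g) x := by
        intro c hc
        rw [Finset.mem_range] at hc
        rw [Finset.range_eq_Ico, Finset.range_eq_Ico,
          Finset.sum_Ico_consecutive _ (Nat.zero_le c) (by omega : c ≤ m)]
      rw [Finset.sum_congr rfl h3, Finset.sum_add_distrib]
      congr 1
      · rw [Finset.sum_range_succ']
        simp
      · rw [Finset.sum_range_succ]
        simp
    rw [htri]
    rw [Finset.smul_sum]
    refine Finset.sum_congr rfl fun b hb => ?_
    rw [← pc_outer_sum (Finset.range m) (fun a => pc 2 a (ex f) (ex μ)) (ex g) n b x]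
    rw [show (fun y => ∑ a ∈ Finset.range m, pc 2 a (ex f) (ex μ) y)
          = tc m 2 (ex f) (ex μ) from rfl, hf']
    rw [pc_outer_smul]
    rw [show tc 2 m (ex μ) (ex f)
          = (fun y => ∑ k ∈ Finset.range 2, pc m k (ex μ) (ex f) y) from rfl]
    rw [pc_outer_sum]
    rw [Finset.sum_range_succ, Finset.sum_range_one]
  -- STEP B
  have hB : tc 2 (m+n-1) (ex μ) (tc m n (ex f) (ex g)) x
      = (∑ i ∈ Finset.range m, pc n i (pc m 0 (ex μ) (ex f)) (ex g) x)
        + ∑ i ∈ Finset.range m, pc n (i+1) (pc m 1 (ex μ) (ex f)) (ex g) x := by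
    show ∑ j ∈ Finset.range 2, pc (m+n-1) j (ex μ) (tc m n (ex f) (ex g)) x = _
    rw [Finset.sum_range_succ, Finset.sum_range_one]
    congr 1
    · rw [show tc m n (ex f) (ex g)
            = (fun y => ∑ i ∈ Finset.range m, pc n i (ex f) (ex g) y) from rfl]
      rw [pc_ex_inner_sum μ (show (0:ℕ) < 2 by omega)]
      refine Finset.sum_congr rfl fun i hi => ?_
      rw [Finset.mem_range] at hi
      have e0 := pc_nested (p:=n) μ (ex f) (ex g) (show (0:ℕ) < 2 by omega) hi
      rw [show (0:ℕ)+i = i by omega] at e0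
      exact (congrFun e0 x).symm
    · rw [show tc m n (ex f) (ex g)
            = (fun y => ∑ i ∈ Finset.range m, pc n i (ex f) (ex g) y) from rfl]
      rw [pc_ex_inner_sum μ (show (1:ℕ) < 2 by omega)]
      refine Finset.sum_congr rfl fun i hi => ?_
      rw [Finset.mem_range] at hi
      have e1 := pc_nested (p:=n) μ (ex f) (ex g) (show (1:ℕ) < 2 by omega) hi
      rw [show (1:ℕ)+i = i+1 by omega] at e1
      exact (congrFun e1 x).symm
  rw [hA, hB]
  -- final bookkeeping
  rw [Finset.sum_add_distrib, Finset.sum_range_succ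
        (fun b => pc n b (pc m 0 (ex μ) (ex f)) (ex g) x),
      Finset.sum_range_succ' (fun b => pc n b (pc m 1 (ex μ) (ex f)) (ex g) x)]
  have hodd : ∀ v : L, sgn ((n:ℤ)-1) • sgn (((m+n-1:ℕ):ℤ)-1) •
        (((∑ i ∈ Finset.range m, pc n i (pc m 0 (ex μ) (ex f)) (ex g) x)
          + ∑ i ∈ Finset.range m, pc n (i+1) (pc m 1 (ex μ) (ex f)) (ex g) x) : L)
      = sgn ((m:ℤ)-1) •
        ((∑ i ∈ Finset.range m, pc n i (pc m 0 (ex μ) (ex f)) (ex g) x)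
          + ∑ i ∈ Finset.range m, pc n (i+1) (pc m 1 (ex μ) (ex f)) (ex g) x) := by
    intro v
    by_cases hm : m = 0
    · subst hm
      simp
    · have hcast : (((m+n-1:ℕ):ℤ)-1) = (m:ℤ)+(n:ℤ)-2 := by omega
      rw [hcast, sgn_smul_sgn_smul,
        show ((n:ℤ)-1) + ((m:ℤ)+(n:ℤ)-2) = ((m:ℤ)-1) + 2*((n:ℤ)-1) by ring,
        sgn_add_two_mul]
  have hQ := congrFun (pc_disjoint (n:=m) (p:=n) (ex μ) (ex f) (ex g)
    (show 0 < 1 by omega) (sup_ex g)) x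
  rw [show 1+n-1 = n by omega] at hQ
  rw [Pi.smul_apply] at hQ
  set P := pc n m (pc m 0 (ex μ) (ex f)) (ex g) x with hP
  set Q := pc n 0 (pc m 1 (ex μ) (ex f)) (ex g) x with hQdef
  set R := pc m n (pc n 0 (ex μ) (ex g)) (ex f) x with hR
  set S0 := ∑ i ∈ Finset.range m, pc n i (pc m 0 (ex μ) (ex f)) (ex g) x with hS0
  set S1 := ∑ i ∈ Finset.range m, pc n (i+1) (pc m 1 (ex μ) (ex f)) (ex g) x with hS1
  rw [show (((2:ℕ):ℤ) - 1) = 1 by norm_num, mul_one]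
  rw [neg_sub, smul_sub]
  rw [hodd 0]
  rw [sgn_smul_sgn_smul_self]
  rw [← smul_sub]
  rw [show S0 + S1 - (S0 + P + (S1 + Q)) = -(P+Q) from by abel]
  rw [hQ, smul_neg, smul_add]
  rw [sgn_smul_sgn_smul, sgn_smul_sgn_smul]
  rw [show sgn ((m:ℤ)*(n:ℤ) + (n:ℤ)) = sgn (((m:ℤ)-1) + ((m:ℤ)-1)*((n:ℤ)-1)) from by
    rw [show (m:ℤ)*(n:ℤ)+(n:ℤ) = (((m:ℤ)-1) + ((m:ℤ)-1)*((n:ℤ)-1)) + 2*(n:ℤ) by ring,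
      sgn_add_two_mul]]
  have h1 : sgn ((m:ℤ)) = -sgn ((m:ℤ)-1) := by
    have h := sgn_succ ((m:ℤ)-1)
    rw [sub_add_cancel] at h
    exact h
  rw [h1, neg_smul]
  abel


end OperadPrelude
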